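/- arXiv:math-ph/9907017 — 2 statements merged into one kernel-verified Lean document; each statement's English description precedes it below -/
import Mathlib

section
/- Let C_∞(σ, x) for x ∈ ℝ², σ real with |σ| small, be defined by C_∞(σ,x) = (2π)⁻² ∫_{ℝ²} dp · e^{ipx}/p² · [(e^{p⁴}+σ)⁻¹ − (e^{L⁴p⁴}+σ)⁻¹]. Then C_∞(σ, 0) = (log L)/(2π(1+σ)). -/
open MeasureTheory Set Real Filter Topology


theorem aux_pos (σ : ℝ) (hσ : |σ| < 1) {u : ℝ} (hu : 0 ≤ u) : 0 < Real.exp u + σ := by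
  have h1 : -1 < σ := (abs_lt.mp hσ).1
  have h2 : (1:ℝ) ≤ Real.exp u := Real.one_le_exp hu
  linarith

theorem aux_cont (σ : ℝ) (hσ : |σ| < 1) (c : ℝ) (hc : 0 < c) :
    ContinuousOn (fun r : ℝ => r⁻¹ * (Real.exp (c * r^4) + σ)⁻¹) (Set.Ioi 0) := by
  apply ContinuousOn.mul
  · exact ContinuousOn.inv₀ continuousOn_id (fun x hx => ne_of_gt hx)
  · apply ContinuousOn.inv₀
    · fun_prop
    · intro x hx
      exact ne_of_gt (aux_pos σ hσ (by positivity))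

theorem aux_ii (σ : ℝ) (hσ : |σ| < 1) (c : ℝ) (hc : 0 < c) {a b : ℝ} (ha : 0 < a) (hb : 0 < b) :
    IntervalIntegrable (fun r : ℝ => r⁻¹ * (Real.exp (c * r^4) + σ)⁻¹) volume a b := by
  apply ContinuousOn.intervalIntegrable
  exact (aux_cont σ hσ c hc).mono (fun x hx => lt_of_lt_of_le (lt_min ha hb) hx.1)

theorem aux_ii1 (σ : ℝ) (hσ : |σ| < 1) {a b : ℝ} (ha : 0 < a) (hb : 0 < b) :
    IntervalIntegrable (fun r : ℝ => r⁻¹ * (Real.exp (r^4) + σ)⁻¹) volume a b := by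
  have := aux_ii σ hσ 1 one_pos ha hb
  simpa using this

theorem aux_key (L σ : ℝ) (hL : 1 < L) (hσ : |σ| < 1) {a b : ℝ} (ha : 0 < a) (hb : 0 < b) :
    (∫ r in a..b, r⁻¹ * ((Real.exp (r^4) + σ)⁻¹ - (Real.exp (L^4 * r^4) + σ)⁻¹))
      = (∫ r in a..(L*a), r⁻¹ * (Real.exp (r^4) + σ)⁻¹)
        - ∫ r in b..(L*b), r⁻¹ * (Real.exp (r^4) + σ)⁻¹ := by
  have hL0 : (0:ℝ) < L := lt_trans one_pos hL
  have hL4 : (0:ℝ) < L^4 := by positivity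
  set h : ℝ → ℝ := fun r => r⁻¹ * (Real.exp (r^4) + σ)⁻¹ with hh
  -- step 1: split the integral
  have step1 : (∫ r in a..b, r⁻¹ * ((Real.exp (r^4) + σ)⁻¹ - (Real.exp (L^4 * r^4) + σ)⁻¹))
      = (∫ r in a..b, h r) - ∫ r in a..b, r⁻¹ * (Real.exp (L^4 * r^4) + σ)⁻¹ := by
    rw [← intervalIntegral.integral_sub (aux_ii1 σ hσ ha hb) (aux_ii σ hσ _ hL4 ha hb)]
    congr 1; ext r; ring
  -- step 2: scaling
  have hfun : (fun r : ℝ => r⁻¹ * (Real.exp (L^4 * r^4) + σ)⁻¹) = fun r => L * h (L * r) := by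
    ext r
    simp only [hh, mul_pow]
    rw [mul_inv, ← mul_assoc, ← mul_assoc, mul_inv_cancel₀ (ne_of_gt hL0), one_mul]
  have step2 : (∫ r in a..b, r⁻¹ * (Real.exp (L^4 * r^4) + σ)⁻¹)
      = ∫ r in (L*a)..(L*b), h r := by
    rw [hfun, intervalIntegral.integral_const_mul, ← smul_eq_mul,
      intervalIntegral.smul_integral_comp_mul_left h L]
  -- step 3: Chasles
  have i1 : IntervalIntegrable h volume a (L*a) := aux_ii1 σ hσ ha (by positivity)
  have i2 : IntervalIntegrable h volume (L*a) b := aux_ii1 σ hσ (by positivity) hb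
  have i3 : IntervalIntegrable h volume b (L*b) := aux_ii1 σ hσ hb (by positivity)
  have c1 := intervalIntegral.integral_add_adjacent_intervals i1 i2
  have c2 := intervalIntegral.integral_add_adjacent_intervals i2 i3
  rw [step1, step2]
  linarith [c1, c2]

theorem aux_bound (L σ : ℝ) (hL : 1 < L) (hσ : |σ| < 1) {a : ℝ} (ha : 0 < a) :
    (Real.exp ((L*a)^4) + σ)⁻¹ * Real.log L
        ≤ (∫ r in a..(L*a), r⁻¹ * (Real.exp (r^4) + σ)⁻¹)
    ∧ (∫ r in a..(L*a), r⁻¹ * (Real.exp (r^4) + σ)⁻¹) ≤ (Real.exp (a^4) + σ)⁻¹ * Real.log L := by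
  have hL0 : (0:ℝ) < L := lt_trans one_pos hL
  have hab : a ≤ L * a := by nlinarith
  have hinv : IntervalIntegrable (fun r : ℝ => r⁻¹) volume a (L*a) := by
    exact intervalIntegral.intervalIntegrable_inv
      (fun x hx => ne_of_gt (lt_of_lt_of_le (lt_min ha (by positivity)) hx.1)) continuousOn_id
  have hIinv : (∫ r in a..(L*a), r⁻¹) = Real.log L := by
    rw [integral_inv_of_pos ha (by positivity), mul_div_assoc, div_self (ne_of_gt ha), mul_one]
  have hmono : ∀ x ∈ Set.Icc a (L*a), ∀ c : ℝ, x^4 ≤ c → 0 ≤ c →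
      (Real.exp c + σ)⁻¹ ≤ (Real.exp (x^4) + σ)⁻¹ := by
    intro x hx c hc hc0
    apply inv_anti₀ (aux_pos σ hσ (by positivity))
    have := Real.exp_le_exp.mpr hc
    linarith
  constructor
  · calc (Real.exp ((L*a)^4) + σ)⁻¹ * Real.log L
        = ∫ r in a..(L*a), (Real.exp ((L*a)^4) + σ)⁻¹ * r⁻¹ := by
          rw [intervalIntegral.integral_const_mul, hIinv]
      _ ≤ _ := by
          apply intervalIntegral.integral_mono_on hab (hinv.const_mul _)
            (aux_ii1 σ hσ ha (by positivity))
          intro x hx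
          have hx0 : 0 < x := lt_of_lt_of_le ha hx.1
          rw [mul_comm]
          apply mul_le_mul_of_nonneg_left _ (by positivity)
          apply hmono x hx
          · exact pow_le_pow_left₀ hx0.le hx.2 4
          · positivity
  · calc (∫ r in a..(L*a), r⁻¹ * (Real.exp (r^4) + σ)⁻¹)
        ≤ ∫ r in a..(L*a), (Real.exp (a^4) + σ)⁻¹ * r⁻¹ := by
          apply intervalIntegral.integral_mono_on hab (aux_ii1 σ hσ ha (by positivity))
            (hinv.const_mul _)
          intro x hx
          have hx0 : 0 < x := lt_of_lt_of_le ha hx.1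
          rw [mul_comm ((Real.exp (a^4) + σ)⁻¹)]
          apply mul_le_mul_of_nonneg_left _ (by positivity)
          apply inv_anti₀ (aux_pos σ hσ (by positivity))
          have : a^4 ≤ x^4 := pow_le_pow_left₀ ha.le hx.1 4
          have := Real.exp_le_exp.mpr this
          linarith
      _ = (Real.exp (a^4) + σ)⁻¹ * Real.log L := by
          rw [intervalIntegral.integral_const_mul, hIinv]

theorem aux_exp_diff {a b : ℝ} (hab : a ≤ b) :
    Real.exp b - Real.exp a ≤ (b - a) * Real.exp b := by
  have h1 : Real.exp (a - b) * Real.exp b = Real.exp a := by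
    rw [← Real.exp_add]; ring_nf
  nlinarith [Real.add_one_le_exp (a - b), Real.exp_pos b]

-- difference of the two inverses, bounded

theorem aux_diff_le (σ : ℝ) (hσ : |σ| < 1) {a b : ℝ} (ha : 0 ≤ a) (hab : a ≤ b) :
    (Real.exp a + σ)⁻¹ - (Real.exp b + σ)⁻¹ ≤ (b - a) * Real.exp b / (1 + σ)^2 := by
  have hs : (0:ℝ) < 1 + σ := by have := (abs_lt.mp hσ).1; linarith
  have hA : 0 < Real.exp a + σ := aux_pos σ hσ ha
  have hB : 0 < Real.exp b + σ := aux_pos σ hσ (le_trans ha hab)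
  have hA1 : 1 + σ ≤ Real.exp a + σ := by linarith [Real.one_le_exp ha]
  have hB1 : 1 + σ ≤ Real.exp b + σ := by linarith [Real.one_le_exp (le_trans ha hab)]
  have heq : (Real.exp a + σ)⁻¹ - (Real.exp b + σ)⁻¹
      = (Real.exp b - Real.exp a) / ((Real.exp a + σ) * (Real.exp b + σ)) := by
    field_simp
    ring
  rw [heq]
  have h1 : (Real.exp b - Real.exp a) / ((Real.exp a + σ) * (Real.exp b + σ))
      ≤ (Real.exp b - Real.exp a) / (1 + σ)^2 := by
    apply div_le_div_of_nonneg_left _ (by positivity) _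
    · linarith [Real.exp_le_exp.mpr hab]
    · nlinarith
  refine le_trans h1 ?_
  apply div_le_div_of_nonneg_right ?_ (by positivity)
  exact aux_exp_diff hab

theorem aux_nonneg (L σ : ℝ) (hL : 1 < L) (hσ : |σ| < 1) {r : ℝ} (hr : 0 < r) :
    0 ≤ r⁻¹ * ((Real.exp (r^4) + σ)⁻¹ - (Real.exp (L^4 * r^4) + σ)⁻¹) := by
  have h1 : r^4 ≤ L^4 * r^4 := by nlinarith [pow_pos hr 4, one_lt_pow₀ (n := 4) hL (by norm_num)]
  apply mul_nonneg (by positivity)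
  have := inv_anti₀ (aux_pos σ hσ (by positivity))
    (by linarith [Real.exp_le_exp.mpr h1] :
      Real.exp (r^4) + σ ≤ Real.exp (L^4 * r^4) + σ)
  linarith

theorem aux_integrable (L σ : ℝ) (hL : 1 < L) (hσ : |σ| < 1) :
    IntegrableOn (fun r : ℝ => r⁻¹ * ((Real.exp (r^4) + σ)⁻¹ - (Real.exp (L^4*r^4) + σ)⁻¹))
      (Set.Ioi 0) := by
  have hs : (0:ℝ) < 1 + σ := by have := (abs_lt.mp hσ).1; linarith
  have hL0 : (0:ℝ) < L := lt_trans one_pos hL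
  have hL4 : (1:ℝ) < L^4 := one_lt_pow₀ hL (by norm_num)
  set f : ℝ → ℝ := fun r => r⁻¹ * ((Real.exp (r^4) + σ)⁻¹ - (Real.exp (L^4*r^4) + σ)⁻¹) with hf
  have hcont : ContinuousOn f (Set.Ioi 0) := by
    apply ContinuousOn.mul
    · exact ContinuousOn.inv₀ continuousOn_id (fun x hx => ne_of_gt hx)
    · apply ContinuousOn.sub
      · apply ContinuousOn.inv₀ (by fun_prop)
        intro x hx; exact ne_of_gt (aux_pos σ hσ (by positivity))
      · apply ContinuousOn.inv₀ (by fun_prop)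
        intro x hx
        have : (0:ℝ) < x := hx
        exact ne_of_gt (aux_pos σ hσ (by positivity))
  have part1 : IntegrableOn f (Set.Ioc 0 1) := by
    have hmeas : AEStronglyMeasurable f (volume.restrict (Set.Ioc (0:ℝ) 1)) :=
      (hcont.mono Set.Ioc_subset_Ioi_self).aestronglyMeasurable measurableSet_Ioc
    apply Integrable.mono' (integrable_const ((L^4 - 1) * Real.exp (L^4) / (1+σ)^2)) hmeas
    filter_upwards [ae_restrict_mem measurableSet_Ioc] with r hr
    obtain ⟨hr0, hr1⟩ := hr
    have h1 : r^4 ≤ L^4 * r^4 := by nlinarith [pow_pos hr0 4]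
    rw [Real.norm_eq_abs, abs_of_nonneg (aux_nonneg L σ hL hσ hr0)]
    have hd := aux_diff_le σ hσ (by positivity : (0:ℝ) ≤ r^4) h1
    have hr4 : r^4 ≤ 1 := pow_le_one₀ hr0.le hr1
    have hrinv : r⁻¹ * r^4 = r^3 := by field_simp
    calc f r ≤ r⁻¹ * ((L^4*r^4 - r^4) * Real.exp (L^4*r^4) / (1+σ)^2) := by
          apply mul_le_mul_of_nonneg_left hd (by positivity)
      _ = r^3 * ((L^4 - 1) * Real.exp (L^4*r^4) / (1+σ)^2) := by
          field_simp
      _ ≤ (L^4 - 1) * Real.exp (L^4) / (1+σ)^2 := by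
          have e1 : Real.exp (L^4*r^4) ≤ Real.exp (L^4) := by
            apply Real.exp_le_exp.mpr; nlinarith
          have e2 : r^3 ≤ 1 := pow_le_one₀ hr0.le hr1
          have e3 : (0:ℝ) < Real.exp (L^4*r^4) := Real.exp_pos _
          have hnum : r^3 * ((L^4 - 1) * Real.exp (L^4*r^4)) ≤ (L^4 - 1) * Real.exp (L^4) := by
            nlinarith [mul_nonneg (sub_nonneg.mpr e2)
                (mul_nonneg (by linarith : (0:ℝ) ≤ L^4 - 1) e3.le),
              mul_le_mul_of_nonneg_left e1 (by linarith : (0:ℝ) ≤ L^4 - 1)]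
          calc r^3 * ((L^4 - 1) * Real.exp (L^4*r^4) / (1+σ)^2)
              = r^3 * ((L^4 - 1) * Real.exp (L^4*r^4)) / (1+σ)^2 := by ring
            _ ≤ (L^4 - 1) * Real.exp (L^4) / (1+σ)^2 :=
                div_le_div_of_nonneg_right hnum (by positivity)
  have part2 : IntegrableOn f (Set.Ioi 1) := by
    have hmeas : AEStronglyMeasurable f (volume.restrict (Set.Ioi (1:ℝ))) :=
      (hcont.mono (Set.Ioi_subset_Ioi zero_le_one)).aestronglyMeasurable measurableSet_Ioi
    have hexp : IntegrableOn (fun r : ℝ => 2 * Real.exp (-r)) (Set.Ioi 1) := by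
      have := (exp_neg_integrableOn_Ioi (1:ℝ) (one_pos)).const_mul (2:ℝ)
      simpa [IntegrableOn] using this
    apply Integrable.mono' hexp hmeas
    filter_upwards [ae_restrict_mem measurableSet_Ioi] with r hr
    have hr1 : (1:ℝ) < r := hr
    have hr0 : (0:ℝ) < r := lt_trans one_pos hr1
    rw [Real.norm_eq_abs, abs_of_nonneg (aux_nonneg L σ hL hσ hr0)]
    have h1 : r^4 ≤ L^4 * r^4 := by nlinarith [pow_pos hr0 4]
    have hg0 : (0:ℝ) < Real.exp (L^4*r^4) + σ := aux_pos σ hσ (by positivity)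
    have hstep1 : f r ≤ (Real.exp (r^4) + σ)⁻¹ := by
      have hrinv : r⁻¹ ≤ 1 := by
        rw [inv_le_one_iff₀]; right; linarith
      have hgpos : 0 < (Real.exp (r^4) + σ)⁻¹ := by
        exact inv_pos.mpr (aux_pos σ hσ (by positivity))
      have hdiff : (Real.exp (r^4) + σ)⁻¹ - (Real.exp (L^4*r^4) + σ)⁻¹
          ≤ (Real.exp (r^4) + σ)⁻¹ := by
        have : 0 ≤ (Real.exp (L^4*r^4) + σ)⁻¹ := by positivity
        linarith
      have hnn := aux_nonneg L σ hL hσ hr0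
      calc f r ≤ 1 * ((Real.exp (r^4) + σ)⁻¹ - (Real.exp (L^4*r^4) + σ)⁻¹) := by
            apply mul_le_mul_of_nonneg_right hrinv
            have := inv_anti₀ (aux_pos σ hσ (by positivity : (0:ℝ) ≤ r^4))
              (by linarith [Real.exp_le_exp.mpr h1] :
                Real.exp (r^4) + σ ≤ Real.exp (L^4*r^4) + σ)
            linarith
        _ ≤ (Real.exp (r^4) + σ)⁻¹ := by rw [one_mul]; exact hdiff
    refine le_trans hstep1 ?_
    have hrr : r ≤ r^4 := le_self_pow₀ hr1.le (by norm_num)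
    have h2 : Real.exp r + σ ≤ Real.exp (r^4) + σ := by linarith [Real.exp_le_exp.mpr hrr]
    have h3 : (Real.exp (r^4) + σ)⁻¹ ≤ (Real.exp r + σ)⁻¹ :=
      inv_anti₀ (aux_pos σ hσ (by linarith)) h2
    refine le_trans h3 ?_
    have h4 : Real.exp r / 2 ≤ Real.exp r + σ := by
      have he : (2:ℝ) ≤ Real.exp r := by
        have := Real.add_one_le_exp (1:ℝ)
        have := Real.exp_le_exp.mpr hr1.le
        linarith
      have habs := (abs_lt.mp hσ).1
      linarith
    have h5 : (Real.exp r + σ)⁻¹ ≤ (Real.exp r / 2)⁻¹ :=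
      inv_anti₀ (by positivity) h4
    refine le_trans h5 (le_of_eq ?_)
    rw [Real.exp_neg, inv_div, div_eq_mul_inv]
  have : Set.Ioi (0:ℝ) = Set.Ioc 0 1 ∪ Set.Ioi 1 := (Set.Ioc_union_Ioi_eq_Ioi zero_le_one).symm
  rw [this]
  exact part1.union part2

theorem aux_radial (L σ : ℝ) (hL : 1 < L) (hσ : |σ| < 1) :
    (∫ r in Set.Ioi (0:ℝ), r⁻¹ * ((Real.exp (r^4) + σ)⁻¹ - (Real.exp (L^4*r^4) + σ)⁻¹))
      = (1+σ)⁻¹ * Real.log L := by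
  have hs : (0:ℝ) < 1 + σ := by have := (abs_lt.mp hσ).1; linarith
  have hL0 : (0:ℝ) < L := lt_trans one_pos hL
  have hlogL : 0 ≤ Real.log L := Real.log_nonneg hL.le
  set f : ℝ → ℝ := fun r => r⁻¹ * ((Real.exp (r^4) + σ)⁻¹ - (Real.exp (L^4*r^4) + σ)⁻¹) with hf
  set A : ℝ → ℝ := fun a => ∫ r in a..(L*a), r⁻¹ * (Real.exp (r^4) + σ)⁻¹ with hA
  set ε : ℕ → ℝ := fun n => ((n:ℝ)+1)⁻¹ with hε
  set T : ℕ → ℝ := fun n => (n:ℝ)+1 with hT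
  have hεpos : ∀ n, 0 < ε n := fun n => by positivity
  have hTpos : ∀ n, 0 < T n := fun n => by positivity
  have hεle : ∀ n, ε n ≤ T n := fun n => by
    rw [hε, hT]
    simp only []
    rw [inv_le_iff_one_le_mul₀ (by positivity)]
    nlinarith [Nat.cast_nonneg (α := ℝ) n]
  -- the sets
  set s : ℕ → Set ℝ := fun n => Set.Ioc (ε n) (T n) with hsdef
  have hsm : ∀ n, MeasurableSet (s n) := fun n => measurableSet_Ioc
  have hmono : Monotone s := by
    intro m n hmn
    apply Set.Ioc_subset_Ioc
    · apply inv_anti₀ (by positivity)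
      exact_mod_cast by exact_mod_cast add_le_add_left (Nat.cast_le.mpr hmn) 1
    · exact add_le_add_left (Nat.cast_le.mpr hmn) 1
  have hunion : (⋃ n, s n) = Set.Ioi (0:ℝ) := by
    ext x
    simp only [Set.mem_iUnion, Set.mem_Ioc, Set.mem_Ioi]
    constructor
    · rintro ⟨n, h1, h2⟩; exact lt_trans (hεpos n) h1
    · intro hx
      obtain ⟨n, hn⟩ := exists_nat_ge (max x⁻¹ x)
      refine ⟨n, ?_, ?_⟩
      · have h1 : x⁻¹ < (n:ℝ) + 1 := lt_of_le_of_lt (le_trans (le_max_left _ _) hn) (by linarith)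
        rw [hε]
        simp only []
        rw [inv_lt_iff_one_lt_mul₀ (by positivity)]
        have h2 := mul_lt_mul_of_pos_left h1 hx
        rw [mul_inv_cancel₀ (ne_of_gt hx)] at h2
        linarith
      · exact le_trans (le_trans (le_max_right _ _) hn) (by simp [hT])
  -- limit via monotone sets
  have hfi : IntegrableOn f (⋃ n, s n) := by rw [hunion]; exact aux_integrable L σ hL hσ
  have h1 : Tendsto (fun n => ∫ r in s n, f r) atTop (𝓝 (∫ r in Set.Ioi (0:ℝ), f r)) := by
    have := tendsto_setIntegral_of_monotone hsm hmono hfi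
    rwa [hunion] at this
  -- identify each term
  have h2 : ∀ n, (∫ r in s n, f r) = A (ε n) - A (T n) := by
    intro n
    rw [hsdef]
    simp only []
    rw [← intervalIntegral.integral_of_le (hεle n)]
    exact aux_key L σ hL hσ (hεpos n) (hTpos n)
  -- limit of A (ε n)
  have hεlim : Tendsto ε atTop (𝓝 0) := by
    rw [hε]
    simpa [one_div] using (tendsto_one_div_add_atTop_nhds_zero_nat :
      Tendsto (fun n : ℕ => 1 / ((n:ℝ) + 1)) atTop (𝓝 0))
  have hAε : Tendsto (fun n => A (ε n)) atTop (𝓝 ((1+σ)⁻¹ * Real.log L)) := by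
    have hlow : Tendsto (fun n => (Real.exp ((L * ε n)^4) + σ)⁻¹ * Real.log L) atTop
        (𝓝 ((1+σ)⁻¹ * Real.log L)) := by
      have hc : ContinuousAt (fun x : ℝ => (Real.exp ((L * x)^4) + σ)⁻¹ * Real.log L) 0 := by
        apply ContinuousAt.mul _ continuousAt_const
        apply ContinuousAt.inv₀ (by fun_prop)
        exact ne_of_gt (by norm_num; linarith)
      have := hc.tendsto.comp hεlim
      simpa [Function.comp_def] using this
    have hhigh : Tendsto (fun n => (Real.exp ((ε n)^4) + σ)⁻¹ * Real.log L) atTop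
        (𝓝 ((1+σ)⁻¹ * Real.log L)) := by
      have hc : ContinuousAt (fun x : ℝ => (Real.exp (x^4) + σ)⁻¹ * Real.log L) 0 := by
        apply ContinuousAt.mul _ continuousAt_const
        apply ContinuousAt.inv₀ (by fun_prop)
        exact ne_of_gt (by norm_num; linarith)
      have := hc.tendsto.comp hεlim
      simpa [Function.comp_def] using this
    exact tendsto_of_tendsto_of_tendsto_of_le_of_le hlow hhigh
      (fun n => (aux_bound L σ hL hσ (hεpos n)).1)
      (fun n => (aux_bound L σ hL hσ (hεpos n)).2)
  -- limit of A (T n)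
  have hTlim : Tendsto T atTop atTop :=
    tendsto_atTop_add_const_right _ 1 tendsto_natCast_atTop_atTop
  have hAT : Tendsto (fun n => A (T n)) atTop (𝓝 0) := by
    have hup : Tendsto (fun n => (Real.exp ((T n)^4) + σ)⁻¹ * Real.log L) atTop (𝓝 0) := by
      have h1 : Tendsto (fun x : ℝ => Real.exp (x^4) + σ) atTop atTop := by
        apply tendsto_atTop_add_const_right
        exact Real.tendsto_exp_atTop.comp (tendsto_pow_atTop (by norm_num))
      have := (h1.inv_tendsto_atTop).comp hTlim
      simpa using this.mul_const (Real.log L)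
    have hlow : Tendsto (fun n => (Real.exp ((L * T n)^4) + σ)⁻¹ * Real.log L) atTop (𝓝 0) := by
      have h1 : Tendsto (fun x : ℝ => Real.exp ((L*x)^4) + σ) atTop atTop := by
        apply tendsto_atTop_add_const_right
        apply Real.tendsto_exp_atTop.comp
        apply (tendsto_pow_atTop (by norm_num : (4:ℕ) ≠ 0)).comp
        exact (tendsto_const_mul_atTop_of_pos hL0).mpr tendsto_id
      have := (h1.inv_tendsto_atTop).comp hTlim
      simpa using this.mul_const (Real.log L)
    exact tendsto_of_tendsto_of_tendsto_of_le_of_le hlow hup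
      (fun n => (aux_bound L σ hL hσ (hTpos n)).1)
      (fun n => (aux_bound L σ hL hσ (hTpos n)).2)
  have h3 : Tendsto (fun n => ∫ r in s n, f r) atTop (𝓝 ((1+σ)⁻¹ * Real.log L - 0)) := by
    simp_rw [h2]
    exact hAε.sub hAT
  rw [sub_zero] at h3
  exact tendsto_nhds_unique h1 h3

/-- the value at `x = 0` of the two-dimensional slice covariance:
`C_∞(σ,0) = (2π)⁻² ∫_{ℝ²} dp p⁻² [(e^{p⁴}+σ)⁻¹ − (e^{L⁴p⁴}+σ)⁻¹] = log L/(2π(1+σ))`. -/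
theorem stmt4 (L σ : ℝ) (hL : 1 < L) (hσ : |σ| < 1) :
    (2 * Real.pi)⁻¹ ^ 2 *
      ∫ p : EuclideanSpace ℝ (Fin 2),
        (‖p‖ ^ 2)⁻¹ *
          ((Real.exp (‖p‖ ^ 4) + σ)⁻¹ - (Real.exp (L ^ 4 * ‖p‖ ^ 4) + σ)⁻¹)
      = Real.log L / (2 * Real.pi * (1 + σ)) := by
  have hs : (0:ℝ) < 1 + σ := by have := (abs_lt.mp hσ).1; linarith
  have hpolar := integral_fun_norm_addHaar (volume : Measure (EuclideanSpace ℝ (Fin 2)))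
    (fun r : ℝ => (r ^ 2)⁻¹ * ((Real.exp (r ^ 4) + σ)⁻¹ - (Real.exp (L ^ 4 * r ^ 4) + σ)⁻¹))
  rw [hpolar]
  have hdim : Module.finrank ℝ (EuclideanSpace ℝ (Fin 2)) = 2 := finrank_euclideanSpace_fin
  rw [hdim]
  have hball : (volume (Metric.ball (0 : EuclideanSpace ℝ (Fin 2)) 1)).toReal = Real.pi := by
    rw [EuclideanSpace.volume_ball (Fin 2) 0 1]
    simp only [Fintype.card_fin]
    rw [ENNReal.toReal_mul]
    norm_num
    exact Real.sq_sqrt Real.pi_nonneg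
  rw [measureReal_def, hball]
  have hset : (∫ y in Set.Ioi (0:ℝ), y ^ (2-1) •
      ((y ^ 2)⁻¹ * ((Real.exp (y ^ 4) + σ)⁻¹ - (Real.exp (L ^ 4 * y ^ 4) + σ)⁻¹)))
      = ∫ r in Set.Ioi (0:ℝ), r⁻¹ * ((Real.exp (r^4) + σ)⁻¹ - (Real.exp (L^4*r^4) + σ)⁻¹) := by
    apply setIntegral_congr_fun measurableSet_Ioi
    intro y hy
    have hy0 : (0:ℝ) < y := hy
    simp only [smul_eq_mul]
    rw [show (2-1 : ℕ) = 1 from rfl, pow_one]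
    have hne : y ≠ 0 := ne_of_gt hy0
    field_simp
  rw [hset, aux_radial L σ hL hσ]
  rw [nsmul_eq_mul, smul_eq_mul]
  have hπ : Real.pi ≠ 0 := Real.pi_ne_zero
  field_simp
  ring
end

section
/- Let V(φ) = ∫_Δ cos(φ(x)) dx on a unit cube Δ. For any 0 < ε < 1, any h ≥ 1, and all complex ζ with |ζ| sufficiently small (depending on h, ε), one has ∑_{n≥0} (h^n/n!) sup_φ ‖(e^{ζV} − 1)_n(φ)‖ ≤ |ζ|^{1−ε} and ∑_{n≥0} (h^n/n!) sup_φ ‖(e^{ζV} − ζV − 1)_n(φ)‖ ≤ |ζ|^{2−ε}. -/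
open MeasureTheory BoundedContinuousFunction Finset

/-! ### Auxiliary development -/

namespace Stmt10Aux

/-! #### The trigonometric family `gg c = cos (· + c)` -/

noncomputable def gg (c : ℝ) : ℝ → ℝ := fun x => Real.cos (x + c)

lemma gg_hasDerivAt (c x : ℝ) : HasDerivAt (gg c) (gg (c + Real.pi/2) x) x := by
  have h : HasDerivAt (fun y : ℝ => Real.cos (y + c)) (-Real.sin (x + c)) x := by
    simpa [Function.comp_def] using (Real.hasDerivAt_cos (x + c)).comp x ((hasDerivAt_id x).add_const c)
  exact h.congr_deriv (by simp [gg, ← add_assoc, Real.cos_add_pi_div_two])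

lemma gg_lip (c : ℝ) : LipschitzWith 1 (gg c) := by
  apply lipschitzWith_of_nnnorm_deriv_le (fun x => (gg_hasDerivAt c x).differentiableAt)
  intro x
  rw [(gg_hasDerivAt c x).deriv]
  simp only [← NNReal.coe_le_coe, coe_nnnorm, NNReal.coe_one, Real.norm_eq_abs]
  exact Real.abs_cos_le_one _

lemma gg_bound (c x : ℝ) : |gg c x| ≤ 1 := Real.abs_cos_le_one _

lemma gg_taylor (c u t : ℝ) :
    |gg c (u + t) - gg c u - gg (c + Real.pi/2) u * t| ≤ t^2 := by
  set f : ℝ → ℝ := fun s => gg c (u + s) - gg (c + Real.pi/2) u * s with hf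
  have hder : ∀ s : ℝ, HasDerivAt f (gg (c + Real.pi/2) (u + s) - gg (c + Real.pi/2) u) s := by
    intro s
    have h1 : HasDerivAt (fun s : ℝ => gg c (u + s)) (gg (c + Real.pi/2) (u + s)) s := by
      simpa [Function.comp_def] using (gg_hasDerivAt c (u + s)).comp s ((hasDerivAt_id s).const_add u)
    simpa [hf, Pi.sub_def] using h1.sub ((hasDerivAt_id s).const_mul (gg (c + Real.pi/2) u))
  have key : ‖f t - f 0‖ ≤ |t| * ‖t - 0‖ := by
    apply Convex.norm_image_sub_le_of_norm_hasDerivWithin_le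
      (f' := fun s => gg (c + Real.pi/2) (u + s) - gg (c + Real.pi/2) u)
      (fun x _ => (hder x).hasDerivWithinAt) ?_ (convex_Icc (-|t|) (|t|)) ?_ ?_
    · intro s hs
      have := (gg_lip (c + Real.pi/2)).dist_le_mul (u + s) u
      simp only [Real.dist_eq, NNReal.coe_one, one_mul, add_sub_cancel_left] at this
      calc ‖gg (c + Real.pi/2) (u + s) - gg (c + Real.pi/2) u‖ ≤ |s| := this
        _ ≤ |t| := by
            rcases abs_le.2 ⟨hs.1, hs.2⟩ with h; exact h
    · exact ⟨neg_nonpos.2 (abs_nonneg t), abs_nonneg t⟩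
    · exact ⟨neg_abs_le t, le_abs_self t⟩
  have : f t - f 0 = gg c (u + t) - gg c u - gg (c + Real.pi/2) u * t := by
    simp [hf]; ring
  rw [this] at key
  calc |gg c (u + t) - gg c u - gg (c + Real.pi/2) u * t| ≤ |t| * ‖t - 0‖ := key
    _ = t^2 := by rw [sub_zero, Real.norm_eq_abs, ← abs_mul, ← sq, abs_of_nonneg (sq_nonneg t)]

/-! #### The Nemytskii (composition) operators on bounded continuous functions -/

variable {d : ℕ}

abbrev BB (d : ℕ) := BoundedContinuousFunction (Fin d → ℝ) ℝ

noncomputable def NN (d : ℕ) (c : ℝ) : BB d → BB d := fun φ => comp (gg c) (gg_lip c) φ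

lemma NN_apply (c : ℝ) (φ : BB d) (x : Fin d → ℝ) : NN d c φ x = gg c (φ x) := rfl

lemma norm_NN_le (c : ℝ) (φ : BB d) : ‖NN d c φ‖ ≤ 1 := by
  rw [BoundedContinuousFunction.norm_le zero_le_one]
  intro x
  simpa [NN_apply, Real.norm_eq_abs] using gg_bound c (φ x)

lemma hasFDerivAt_NN (c : ℝ) (φ : BB d) :
    HasFDerivAt (NN d c) (ContinuousLinearMap.mul ℝ (BB d) (NN d (c + Real.pi/2) φ)) φ := by
  rw [hasFDerivAt_iff_isLittleO_nhds_zero]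
  have hquad : ∀ ψ : BB d,
      ‖NN d c (φ + ψ) - NN d c φ - (ContinuousLinearMap.mul ℝ (BB d) (NN d (c + Real.pi/2) φ)) ψ‖
        ≤ ‖ψ‖^2 := by
    intro ψ
    rw [BoundedContinuousFunction.norm_le (by positivity)]
    intro x
    have h1 : |gg c (φ x + ψ x) - gg c (φ x) - gg (c + Real.pi/2) (φ x) * ψ x| ≤ (ψ x)^2 :=
      gg_taylor c (φ x) (ψ x)
    have h2 : (ψ x)^2 ≤ ‖ψ‖^2 := by
      have := ψ.norm_coe_le_norm x
      rw [Real.norm_eq_abs] at this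
      nlinarith [abs_nonneg (ψ x), le_abs_self (ψ x), neg_abs_le (ψ x)]
    simpa [NN_apply, Real.norm_eq_abs, ContinuousLinearMap.mul_apply'] using h1.trans h2
  have hO : (fun ψ : BB d => NN d c (φ + ψ) - NN d c φ -
        (ContinuousLinearMap.mul ℝ (BB d) (NN d (c + Real.pi/2) φ)) ψ)
      =O[nhds 0] (fun ψ : BB d => ‖ψ‖^2) := by
    apply Asymptotics.IsBigO.of_bound 1
    filter_upwards with ψ
    simpa using hquad ψ
  apply hO.trans_isLittleO
  have : (fun ψ : BB d => ‖ψ‖^2) =o[nhds 0] (fun ψ : BB d => ψ) := by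
    have h := Asymptotics.isLittleO_norm_pow_id (E' := BB d) (n := 2) one_lt_two
    simpa using h
  exact this

lemma fderiv_NN (c : ℝ) :
    fderiv ℝ (NN d c) = fun φ => ContinuousLinearMap.mul ℝ (BB d) (NN d (c + Real.pi/2) φ) :=
  funext fun φ => (hasFDerivAt_NN c φ).fderiv

lemma contDiff_NN : ∀ (n : ℕ) (c : ℝ), ContDiff ℝ n (NN d c) := by
  intro n
  induction n with
  | zero =>
      intro c
      rw [show ((0:ℕ) : WithTop ℕ∞) = 0 from rfl, contDiff_zero]
      have : Differentiable ℝ (NN d c) := fun φ => (hasFDerivAt_NN c φ).differentiableAt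
      exact this.continuous
  | succ n ih =>
      intro c
      rw [show ((n+1:ℕ) : WithTop ℕ∞) = (n : WithTop ℕ∞) + 1 by push_cast; rfl,
        contDiff_succ_iff_fderiv]
      refine ⟨fun φ => (hasFDerivAt_NN c φ).differentiableAt, ?_, ?_⟩
      · intro hcon; exact absurd hcon (by simp)
      · rw [fderiv_NN]
        refine ContDiff.comp ?_ (ih (c + Real.pi/2))
        exact ContinuousLinearMap.contDiff _

lemma norm_iteratedFDeriv_NN_le : ∀ (n : ℕ) (c : ℝ) (φ : BB d),
    ‖iteratedFDeriv ℝ n (NN d c) φ‖ ≤ 1 := by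
  intro n
  induction n with
  | zero =>
      intro c φ
      rw [norm_iteratedFDeriv_zero]
      exact norm_NN_le c φ
  | succ n ih =>
      intro c φ
      rw [← norm_iteratedFDeriv_fderiv, fderiv_NN]
      have hcomp : (fun φ : BB d => ContinuousLinearMap.mul ℝ (BB d) (NN d (c + Real.pi/2) φ))
          = (ContinuousLinearMap.mul ℝ (BB d)) ∘ (NN d (c + Real.pi/2)) := rfl
      rw [hcomp, ContinuousLinearMap.iteratedFDeriv_comp_left _
        ((contDiff_NN n (c + Real.pi/2)).contDiffAt (x := φ)) le_rfl]
      calc ‖(ContinuousLinearMap.mul ℝ (BB d)).compContinuousMultilinearMap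
              (iteratedFDeriv ℝ n (NN d (c + Real.pi/2)) φ)‖
          ≤ ‖ContinuousLinearMap.mul ℝ (BB d)‖ * ‖iteratedFDeriv ℝ n (NN d (c + Real.pi/2)) φ‖ :=
            ContinuousLinearMap.norm_compContinuousMultilinearMap_le _ _
        _ ≤ 1 * 1 := by
            apply mul_le_mul (ContinuousLinearMap.opNorm_mul_le ℝ (BB d)) (ih _ φ)
              (norm_nonneg _) zero_le_one
        _ = 1 := one_mul 1

/-! #### Integration functional and the potential `V` -/

noncomputable def mym (d : ℕ) : Measure (Fin d → ℝ) :=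
  volume.restrict (Set.Icc (0 : Fin d → ℝ) 1)

lemma mym_univ (d : ℕ) : mym d Set.univ = 1 := by
  rw [mym, Measure.restrict_apply_univ, Real.volume_Icc_pi]
  simp

instance (d : ℕ) : IsFiniteMeasure (mym d) := ⟨by rw [mym_univ]; exact ENNReal.one_lt_top⟩

noncomputable def II (d : ℕ) : BB d →L[ℝ] ℝ :=
  LinearMap.mkContinuous
    { toFun := fun φ => ∫ x, φ x ∂(mym d)
      map_add' := fun φ ψ => by
        simp only [BoundedContinuousFunction.coe_add, Pi.add_apply]
        exact integral_add (φ.integrable (mym d)) (ψ.integrable (mym d))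
      map_smul' := fun c φ => by
        simp only [BoundedContinuousFunction.coe_smul, Pi.smul_apply, smul_eq_mul, RingHom.id_apply]
        exact integral_const_mul c _ } 1
    (fun φ => by
      have := φ.norm_integral_le_mul_norm (mym d)
      simpa [Measure.real, mym_univ] using this)

lemma II_norm_le : ‖II d‖ ≤ 1 := LinearMap.mkContinuous_norm_le _ zero_le_one _

noncomputable def LLx (d : ℕ) : BB d →L[ℝ] ℂ := Complex.ofRealCLM.comp (II d)

lemma LLx_norm_le : ‖LLx d‖ ≤ 1 := by
  refine le_trans (ContinuousLinearMap.opNorm_comp_le _ _) ?_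
  have h1 : ‖Complex.ofRealCLM‖ ≤ 1 := by
    rw [Complex.ofRealCLM_norm]
  nlinarith [II_norm_le (d := d), norm_nonneg (II d)]

lemma LLx_apply (φ : BB d) : LLx d φ = ((∫ x, φ x ∂(mym d) : ℝ) : ℂ) := rfl

noncomputable def VV (d : ℕ) : BB d → ℂ := fun φ => LLx d (NN d 0 φ)

lemma VV_eq :
    (fun φ : BB d => ((∫ x in Set.Icc (0 : Fin d → ℝ) 1, Real.cos (φ x) : ℝ) : ℂ)) = VV d := by
  funext φ
  rw [VV, LLx_apply]
  norm_cast
  apply integral_congr_ae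
  filter_upwards with x
  show Real.cos (φ x) = gg 0 (φ x)
  simp [gg]

lemma contDiff_VV (n : ℕ) : ContDiff ℝ n (VV d) := by
  refine ContDiff.comp ?_ (contDiff_NN n 0)
  exact ContinuousLinearMap.contDiff _

lemma norm_iteratedFDeriv_VV_le (n : ℕ) (φ : BB d) :
    ‖iteratedFDeriv ℝ n (VV d) φ‖ ≤ 1 := by
  have hcomp : VV d = (LLx d) ∘ (NN d 0) := rfl
  rw [hcomp, ContinuousLinearMap.iteratedFDeriv_comp_left _ ((contDiff_NN n 0).contDiffAt (x := φ)) le_rfl]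
  calc ‖(LLx d).compContinuousMultilinearMap (iteratedFDeriv ℝ n (NN d 0) φ)‖
      ≤ ‖LLx d‖ * ‖iteratedFDeriv ℝ n (NN d 0) φ‖ :=
        ContinuousLinearMap.norm_compContinuousMultilinearMap_le _ _
    _ ≤ 1 * 1 := mul_le_mul LLx_norm_le (norm_iteratedFDeriv_NN_le n 0 φ) (norm_nonneg _)
        zero_le_one
    _ = 1 := one_mul 1

lemma norm_VV_le (φ : BB d) : ‖VV d φ‖ ≤ 1 := by
  have := norm_iteratedFDeriv_VV_le (d := d) 0 φ
  rwa [norm_iteratedFDeriv_zero] at this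

lemma hasFDerivAt_VV (ψ : BB d) : HasFDerivAt (VV d) (fderiv ℝ (VV d) ψ) ψ :=
  (((contDiff_VV 1).differentiable (by norm_num)) ψ).hasFDerivAt

/-! #### The function `F = exp (ζ V)` and its derivatives -/

noncomputable def FF (d : ℕ) (ζ : ℂ) : BB d → ℂ := fun ψ => Complex.exp (ζ * VV d ψ)

section F
variable (ζ : ℂ)

lemma contDiff_FF (n : ℕ) : ContDiff ℝ n (FF d ζ) :=
  Complex.contDiff_exp.comp (contDiff_const.mul (contDiff_VV n))

lemma hasFDerivAt_FF (ψ : BB d) :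
    HasFDerivAt (FF d ζ) ((ζ * FF d ζ ψ) • fderiv ℝ (VV d) ψ) ψ := by
  have h1 : HasFDerivAt (fun ψ' => ζ * VV d ψ') (ζ • fderiv ℝ (VV d) ψ) ψ :=
    (hasFDerivAt_VV ψ).const_mul ζ
  have h2 : HasFDerivAt Complex.exp
      ((ContinuousLinearMap.smulRight (1 : ℂ →L[ℂ] ℂ) (Complex.exp (ζ * VV d ψ))).restrictScalars ℝ)
      (ζ * VV d ψ) :=
    ((Complex.hasDerivAt_exp (ζ * VV d ψ)).hasFDerivAt).restrictScalars ℝ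
  have h3 := h2.comp ψ h1
  refine h3.congr_fderiv ?_
  ext ψ'
  simp [FF, smul_eq_mul]
  ring

lemma fderiv_FF : fderiv ℝ (FF d ζ) = fun ψ => (ζ * FF d ζ ψ) • fderiv ℝ (VV d) ψ :=
  funext fun ψ => (hasFDerivAt_FF ζ ψ).fderiv

lemma rec_FF (n : ℕ) (φ : BB d) :
    ‖iteratedFDeriv ℝ (n+1) (FF d ζ) φ‖ ≤
      ‖ζ‖ * ∑ i ∈ Finset.range (n + 1),
        (n.choose i : ℝ) * ‖iteratedFDeriv ℝ i (FF d ζ) φ‖ := by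
  rw [← norm_iteratedFDeriv_fderiv, fderiv_FF]
  have hf : ContDiff ℝ n (fun ψ => ζ * FF d ζ ψ) := contDiff_const.mul (contDiff_FF ζ n)
  have hg : ContDiff ℝ n (fderiv ℝ (VV d)) := (contDiff_VV (n+1)).fderiv_right
    (by exact_mod_cast le_refl _)
  have h := norm_iteratedFDeriv_smul_le (𝕜' := ℂ) hf hg φ (le_refl (n : WithTop ℕ∞))
  refine h.trans ?_
  rw [Finset.mul_sum]
  apply Finset.sum_le_sum
  intro i hi
  have h1 : ‖iteratedFDeriv ℝ i (fun ψ => ζ * FF d ζ ψ) φ‖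
      = ‖ζ‖ * ‖iteratedFDeriv ℝ i (FF d ζ) φ‖ := by
    have : (fun ψ => ζ * FF d ζ ψ) = fun ψ => ζ • FF d ζ ψ := by
      funext ψ; simp [smul_eq_mul]
    rw [this, iteratedFDeriv_const_smul_apply' (contDiff_FF ζ i).contDiffAt, norm_smul]
  have h2 : ‖iteratedFDeriv ℝ (n - i) (fderiv ℝ (VV d)) φ‖ ≤ 1 := by
    rw [norm_iteratedFDeriv_fderiv]
    exact norm_iteratedFDeriv_VV_le _ φ
  rw [h1]
  calc (n.choose i : ℝ) * (‖ζ‖ * ‖iteratedFDeriv ℝ i (FF d ζ) φ‖) *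
        ‖iteratedFDeriv ℝ (n - i) (fderiv ℝ (VV d)) φ‖
      ≤ (n.choose i : ℝ) * (‖ζ‖ * ‖iteratedFDeriv ℝ i (FF d ζ) φ‖) * 1 := by
        apply mul_le_mul_of_nonneg_left h2; positivity
    _ = ‖ζ‖ * ((n.choose i : ℝ) * ‖iteratedFDeriv ℝ i (FF d ζ) φ‖) := by ring

noncomputable def Gone (d : ℕ) (ζ : ℂ) : BB d → ℂ := fun ψ => FF d ζ ψ - 1
noncomputable def Gtwo (d : ℕ) (ζ : ℂ) : BB d → ℂ := fun ψ => FF d ζ ψ - ζ * VV d ψ - 1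

lemma contDiff_Gone (n : ℕ) : ContDiff ℝ n (Gone d ζ) := (contDiff_FF ζ n).sub contDiff_const

lemma iteratedFDeriv_Gone (n : ℕ) (hn : n ≠ 0) (φ : BB d) :
    iteratedFDeriv ℝ n (Gone d ζ) φ = iteratedFDeriv ℝ n (FF d ζ) φ := by
  have heq : Gone d ζ = fun ψ => FF d ζ ψ + (-1 : ℂ) := by
    funext ψ; simp [Gone]; ring
  rw [heq, iteratedFDeriv_add_apply' (contDiff_FF ζ n).contDiffAt contDiff_const.contDiffAt,
    iteratedFDeriv_const_of_ne hn]
  simp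

lemma hasFDerivAt_Gtwo (ψ : BB d) :
    HasFDerivAt (Gtwo d ζ) ((ζ * Gone d ζ ψ) • fderiv ℝ (VV d) ψ) ψ := by
  have h1 := (hasFDerivAt_FF ζ ψ).sub ((hasFDerivAt_VV ψ).const_mul ζ)
  have h2 := h1.sub_const (1 : ℂ)
  have : (ζ * FF d ζ ψ) • fderiv ℝ (VV d) ψ - ζ • fderiv ℝ (VV d) ψ
      = (ζ * Gone d ζ ψ) • fderiv ℝ (VV d) ψ := by
    ext v; simp [Gone]; ring
  rw [this] at h2
  exact h2

lemma fderiv_Gtwo : fderiv ℝ (Gtwo d ζ) = fun ψ => (ζ * Gone d ζ ψ) • fderiv ℝ (VV d) ψ :=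
  funext fun ψ => (hasFDerivAt_Gtwo ζ ψ).fderiv

lemma rec_Gtwo (n : ℕ) (φ : BB d) :
    ‖iteratedFDeriv ℝ (n+1) (Gtwo d ζ) φ‖ ≤
      ‖ζ‖ * ∑ i ∈ Finset.range (n + 1),
        (n.choose i : ℝ) * ‖iteratedFDeriv ℝ i (Gone d ζ) φ‖ := by
  rw [← norm_iteratedFDeriv_fderiv, fderiv_Gtwo]
  have hf : ContDiff ℝ n (fun ψ => ζ * Gone d ζ ψ) := contDiff_const.mul (contDiff_Gone ζ n)
  have hg : ContDiff ℝ n (fderiv ℝ (VV d)) := (contDiff_VV (n+1)).fderiv_right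
    (by exact_mod_cast le_refl _)
  have h := norm_iteratedFDeriv_smul_le (𝕜' := ℂ) hf hg φ (le_refl (n : WithTop ℕ∞))
  refine h.trans ?_
  rw [Finset.mul_sum]
  apply Finset.sum_le_sum
  intro i hi
  have h1 : ‖iteratedFDeriv ℝ i (fun ψ => ζ * Gone d ζ ψ) φ‖
      = ‖ζ‖ * ‖iteratedFDeriv ℝ i (Gone d ζ) φ‖ := by
    have : (fun ψ => ζ * Gone d ζ ψ) = fun ψ => ζ • Gone d ζ ψ := by
      funext ψ; simp [smul_eq_mul]
    rw [this, iteratedFDeriv_const_smul_apply' (contDiff_Gone ζ i).contDiffAt, norm_smul]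
  have h2 : ‖iteratedFDeriv ℝ (n - i) (fderiv ℝ (VV d)) φ‖ ≤ 1 := by
    rw [norm_iteratedFDeriv_fderiv]
    exact norm_iteratedFDeriv_VV_le _ φ
  rw [h1]
  calc (n.choose i : ℝ) * (‖ζ‖ * ‖iteratedFDeriv ℝ i (Gone d ζ) φ‖) *
        ‖iteratedFDeriv ℝ (n - i) (fderiv ℝ (VV d)) φ‖
      ≤ (n.choose i : ℝ) * (‖ζ‖ * ‖iteratedFDeriv ℝ i (Gone d ζ) φ‖) * 1 := by
        apply mul_le_mul_of_nonneg_left h2; positivity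
    _ = ‖ζ‖ * ((n.choose i : ℝ) * ‖iteratedFDeriv ℝ i (Gone d ζ) φ‖) := by ring

lemma norm_Gone_le (hz : ‖ζ‖ ≤ 1) (φ : BB d) : ‖Gone d ζ φ‖ ≤ 2 * ‖ζ‖ := by
  have hx : ‖ζ * VV d φ‖ ≤ 1 := by
    calc ‖ζ * VV d φ‖ = ‖ζ‖ * ‖VV d φ‖ := by rw [norm_mul]
      _ ≤ 1 * 1 := mul_le_mul hz (norm_VV_le φ) (norm_nonneg _) zero_le_one
      _ = 1 := one_mul 1
  have h := Complex.exp_bound (x := ζ * VV d φ) (by simpa using hx) one_pos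
  norm_num at h
  calc ‖Gone d ζ φ‖ = ‖Complex.exp (ζ * VV d φ) - 1‖ := rfl
    _ ≤ ‖ζ‖ * ‖VV d φ‖ * 2 := h
    _ = 2 * (‖ζ‖ * ‖VV d φ‖) := by ring
    _ ≤ 2 * (‖ζ‖ * 1) := by
        apply mul_le_mul_of_nonneg_left _ (by norm_num)
        exact mul_le_mul_of_nonneg_left (norm_VV_le φ) (norm_nonneg _)
    _ = 2 * ‖ζ‖ := by ring

lemma norm_Gtwo_le (hz : ‖ζ‖ ≤ 1) (φ : BB d) : ‖Gtwo d ζ φ‖ ≤ ‖ζ‖^2 := by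
  have hx : ‖ζ * VV d φ‖ ≤ 1 := by
    calc ‖ζ * VV d φ‖ = ‖ζ‖ * ‖VV d φ‖ := by rw [norm_mul]
      _ ≤ 1 * 1 := mul_le_mul hz (norm_VV_le φ) (norm_nonneg _) zero_le_one
      _ = 1 := one_mul 1
  have h := Complex.exp_bound (x := ζ * VV d φ) (by simpa using hx) two_pos
  have hsum : ∑ i ∈ Finset.range 2, (ζ * VV d φ) ^ i / (i.factorial : ℂ) = 1 + ζ * VV d φ := by
    simp [Finset.sum_range_succ]
  rw [hsum] at h
  norm_num at h
  have hGeq : ‖Gtwo d ζ φ‖ = ‖Complex.exp (ζ * VV d φ) - (1 + ζ * VV d φ)‖ := by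
    simp only [Gtwo, FF]
    congr 1
    ring
  calc ‖Gtwo d ζ φ‖ ≤ (‖ζ‖ * ‖VV d φ‖)^2 * (3/4) := by rw [hGeq]; exact h
    _ ≤ (‖ζ‖ * ‖VV d φ‖)^2 * 1 := by
        apply mul_le_mul_of_nonneg_left (by norm_num) (by positivity)
    _ = (‖ζ‖ * ‖VV d φ‖)^2 := by ring
    _ ≤ (‖ζ‖ * 1)^2 := by
        apply pow_le_pow_left₀ (by positivity)
        exact mul_le_mul_of_nonneg_left (norm_VV_le φ) (norm_nonneg _)
    _ = ‖ζ‖^2 := by ring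

lemma norm_FF_le (hz : ‖ζ‖ ≤ 1) (φ : BB d) : ‖FF d ζ φ‖ ≤ Real.exp 1 := by
  have : ‖FF d ζ φ‖ = Real.exp ((ζ * VV d φ).re) := Complex.norm_exp _
  rw [this]
  apply Real.exp_le_exp.2
  calc (ζ * VV d φ).re ≤ ‖ζ * VV d φ‖ := Complex.re_le_norm _
    _ = ‖ζ‖ * ‖VV d φ‖ := norm_mul _ _
    _ ≤ 1 * 1 := mul_le_mul hz (norm_VV_le φ) (norm_nonneg _) zero_le_one
    _ = 1 := one_mul 1

end F

/-! #### Real arithmetic lemmas -/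

lemma pow_le_exp_quarter {h : ℝ} (hh : 0 ≤ h) (m : ℕ) :
    h ^ m ≤ Real.exp (4*h) * (1/4)^m * m.factorial := by
  have h1 : (4*h)^m / m.factorial ≤ Real.exp (4*h) :=
    Real.pow_div_factorial_le_exp (x := 4*h) (by linarith) m
  have hfac : (0:ℝ) < m.factorial := by exact_mod_cast m.factorial_pos
  rw [div_le_iff₀ hfac] at h1
  have : (4*h)^m = 4^m * h^m := by rw [mul_pow]
  rw [this] at h1
  have h4 : (0:ℝ) < 4^m := by positivity
  calc h^m = (4^m * h^m) / 4^m := by field_simp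
    _ ≤ (Real.exp (4*h) * m.factorial) / 4^m := by gcongr
    _ = Real.exp (4*h) * (1/4)^m * m.factorial := by
        rw [div_eq_mul_inv, one_div, inv_pow]; ring

lemma geom_quarter_sum (n : ℕ) :
    ∑ i ∈ range (n+1), (1/2:ℝ)^i * (1/4)^(n-i) ≤ 2 * (1/2)^n := by
  have heq : ∀ i ∈ range (n+1), (1/2:ℝ)^i * (1/4)^(n-i) = (1/2)^n * (1/2)^(n-i) := by
    intro i hi
    rw [mem_range] at hi
    have hin : i ≤ n := Nat.lt_succ_iff.mp hi
    have : (1/4:ℝ)^(n-i) = (1/2)^(n-i) * (1/2)^(n-i) := by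
      rw [← mul_pow]; norm_num
    rw [this, ← mul_assoc, ← pow_add]
    congr 2
    omega
  rw [Finset.sum_congr rfl heq, ← Finset.mul_sum]
  have : ∑ i ∈ range (n+1), (1/2:ℝ)^(n-i) = ∑ j ∈ range (n+1), (1/2:ℝ)^j := by
    apply Finset.sum_nbij' (fun i => n - i) (fun j => n - j) <;>
      intros <;> simp_all [mem_range] <;> omega
  rw [this]
  have h2 := sum_geometric_two_le (n+1)
  have hp : (0:ℝ) ≤ (1/2)^n := by positivity
  nlinarith

lemma sum_step {z h M : ℝ} (hz : 0 ≤ z) (hM : 0 ≤ M) (hh : 1 ≤ h)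
    (a c : ℕ → ℝ) (n : ℕ)
    (hrec : a (n+1) ≤ z * ∑ i ∈ range (n+1), (n.choose i : ℝ) * c i)
    (hc : ∀ i, i ≤ n → c i * h^i ≤ M * (1/2)^i * i.factorial) :
    a (n+1) * h^(n+1) ≤ M * (4*h*Real.exp (4*h)*z) * (1/2)^(n+1) * (n+1).factorial := by
  have hh0 : (0:ℝ) < h := by linarith
  have hpow : (0:ℝ) < h^(n+1) := by positivity
  have step1 : a (n+1) * h^(n+1) ≤ z * (∑ i ∈ range (n+1), (n.choose i : ℝ) * c i) * h^(n+1) :=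
    mul_le_mul_of_nonneg_right hrec (le_of_lt hpow)
  have step2 : z * (∑ i ∈ range (n+1), (n.choose i : ℝ) * c i) * h^(n+1)
      = z * ∑ i ∈ range (n+1), (n.choose i : ℝ) * c i * h^(n+1) := by
    rw [mul_assoc, Finset.sum_mul]
  have step3 : ∀ i ∈ range (n+1), (n.choose i : ℝ) * c i * h^(n+1)
      ≤ (h * M * Real.exp (4*h) * n.factorial) * ((1/2)^i * (1/4)^(n-i)) := by
    intro i hi
    rw [mem_range] at hi
    have hin : i ≤ n := Nat.lt_succ_iff.mp hi
    have hsplit : h^(n+1) = h * h^i * h^(n-i) := by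
      rw [← pow_succ', ← pow_add]
      congr 1
      omega
    have hfact : ((n.choose i : ℝ)) * i.factorial * (n-i).factorial = n.factorial := by
      exact_mod_cast congrArg (Nat.cast : ℕ → ℝ) (Nat.choose_mul_factorial_mul_factorial hin)
    have hb1 : c i * h^i ≤ M * (1/2)^i * i.factorial := hc i hin
    have hb2 : h^(n-i) ≤ Real.exp (4*h) * (1/4)^(n-i) * (n-i).factorial :=
      pow_le_exp_quarter (le_of_lt hh0) (n-i)
    have hch : (0:ℝ) ≤ (n.choose i : ℝ) := by positivity
    calc (n.choose i : ℝ) * c i * h^(n+1)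
        = h * ((n.choose i : ℝ) * ((c i * h^i) * h^(n-i))) := by rw [hsplit]; ring
      _ ≤ h * ((n.choose i : ℝ) * ((M * (1/2)^i * i.factorial) *
            (Real.exp (4*h) * (1/4)^(n-i) * (n-i).factorial))) := by
          apply mul_le_mul_of_nonneg_left _ (le_of_lt hh0)
          apply mul_le_mul_of_nonneg_left _ hch
          apply mul_le_mul hb1 hb2 (by positivity)
          positivity
      _ = (h * M * Real.exp (4*h)) * ((1/2)^i * (1/4)^(n-i)) *
            ((n.choose i : ℝ) * i.factorial * (n-i).factorial) := by ring
      _ = (h * M * Real.exp (4*h) * n.factorial) * ((1/2)^i * (1/4)^(n-i)) := by rw [hfact]; ring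
  have step4 : ∑ i ∈ range (n+1), (n.choose i : ℝ) * c i * h^(n+1)
      ≤ (h * M * Real.exp (4*h) * n.factorial) * (2 * (1/2)^n) := by
    calc ∑ i ∈ range (n+1), (n.choose i : ℝ) * c i * h^(n+1)
        ≤ ∑ i ∈ range (n+1), (h * M * Real.exp (4*h) * n.factorial) * ((1/2)^i * (1/4)^(n-i)) :=
          Finset.sum_le_sum step3
      _ = (h * M * Real.exp (4*h) * n.factorial) * ∑ i ∈ range (n+1), (1/2:ℝ)^i * (1/4)^(n-i) := by
          rw [← Finset.mul_sum]
      _ ≤ (h * M * Real.exp (4*h) * n.factorial) * (2 * (1/2)^n) := by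
          apply mul_le_mul_of_nonneg_left (geom_quarter_sum n)
          positivity
  have hfn : (n.factorial : ℝ) ≤ (n+1).factorial := by
    exact_mod_cast Nat.factorial_le (Nat.le_succ n)
  calc a (n+1) * h^(n+1) ≤ z * ∑ i ∈ range (n+1), (n.choose i : ℝ) * c i * h^(n+1) := by
        rw [← step2]; exact step1
    _ ≤ z * ((h * M * Real.exp (4*h) * n.factorial) * (2 * (1/2)^n)) := by
        apply mul_le_mul_of_nonneg_left step4 hz
    _ = M * (4*h*Real.exp (4*h)*z) * (1/2)^(n+1) * n.factorial := by
        rw [pow_succ]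
        ring
    _ ≤ M * (4*h*Real.exp (4*h)*z) * (1/2)^(n+1) * (n+1).factorial := by
        apply mul_le_mul_of_nonneg_left hfn
        positivity

lemma bound_seq {z h : ℝ} (hz : 0 ≤ z) (hh : 1 ≤ h)
    (hK : 4*h*Real.exp (4*h)*z ≤ 1)
    (a : ℕ → ℝ) (ha0 : a 0 ≤ Real.exp 1)
    (hrec : ∀ n, a (n+1) ≤ z * ∑ i ∈ range (n+1), (n.choose i : ℝ) * a i) :
    (∀ n, a n * h^n ≤ Real.exp 1 * (1/2)^n * n.factorial) ∧
    (∀ n, a (n+1) * h^(n+1) ≤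
      (Real.exp 1 * (4*h*Real.exp (4*h)*z)) * (1/2)^(n+1) * (n+1).factorial) := by
  have he : (0:ℝ) ≤ Real.exp 1 := (Real.exp_pos 1).le
  have main : ∀ n, a n * h^n ≤ Real.exp 1 * (1/2)^n * n.factorial := by
    intro n
    induction n using Nat.strong_induction_on with
    | _ n ih =>
      match n with
      | 0 => simpa using ha0
      | (m+1) =>
        have hstep := sum_step hz he hh a a m (hrec m)
          (fun i hi => ih i (Nat.lt_succ_of_le hi))
        calc a (m+1) * h^(m+1)
            ≤ Real.exp 1 * (4*h*Real.exp (4*h)*z) * (1/2)^(m+1) * (m+1).factorial := hstep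
          _ ≤ Real.exp 1 * 1 * (1/2)^(m+1) * (m+1).factorial := by
              apply mul_le_mul_of_nonneg_right _ (by positivity)
              apply mul_le_mul_of_nonneg_right _ (by positivity)
              exact mul_le_mul_of_nonneg_left hK he
          _ = Real.exp 1 * (1/2)^(m+1) * (m+1).factorial := by ring
  refine ⟨main, fun n => ?_⟩
  have hstep := sum_step hz he hh a a n (hrec n) (fun i _ => main i)
  calc a (n+1) * h^(n+1)
      ≤ Real.exp 1 * (4*h*Real.exp (4*h)*z) * (1/2)^(n+1) * (n+1).factorial := hstep
    _ = (Real.exp 1 * (4*h*Real.exp (4*h)*z)) * (1/2)^(n+1) * (n+1).factorial := by ring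

/-! #### Per-order bounds on `Gone` and `Gtwo` -/

section Bounds
variable {h : ℝ} (ζ : ℂ)

lemma bound_Gone (hh : 1 ≤ h) (hz1 : ‖ζ‖ ≤ 1) (hK : 4*h*Real.exp (4*h)*‖ζ‖ ≤ 1)
    (n : ℕ) (φ : BB d) :
    ‖iteratedFDeriv ℝ n (Gone d ζ) φ‖ * h^n ≤
      (Real.exp 1 * (4*h*Real.exp (4*h)*‖ζ‖)) * (1/2)^n * n.factorial := by
  have hz : (0:ℝ) ≤ ‖ζ‖ := norm_nonneg ζ
  have hbs := bound_seq hz hh hK (fun n => ‖iteratedFDeriv ℝ n (FF d ζ) φ‖)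
    (by show ‖iteratedFDeriv ℝ 0 (FF d ζ) φ‖ ≤ Real.exp 1
        rw [norm_iteratedFDeriv_zero]; exact norm_FF_le ζ hz1 φ)
    (fun n => rec_FF ζ n φ)
  match n with
  | 0 =>
      have h0 : ‖iteratedFDeriv ℝ 0 (Gone d ζ) φ‖ ≤ 2 * ‖ζ‖ := by
        rw [norm_iteratedFDeriv_zero]; exact norm_Gone_le ζ hz1 φ
      have he1 : (1:ℝ) ≤ Real.exp 1 := Real.one_le_exp zero_le_one
      have hexp4 : (1:ℝ) ≤ Real.exp (4*h) := Real.one_le_exp (by linarith)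
      simp only [pow_zero, Nat.factorial_zero, Nat.cast_one, mul_one]
      calc ‖iteratedFDeriv ℝ 0 (Gone d ζ) φ‖ ≤ 2 * ‖ζ‖ := h0
        _ ≤ (4*h*Real.exp (4*h)) * ‖ζ‖ := by
            nlinarith [mul_nonneg (show (0:ℝ) ≤ 4*h*Real.exp (4*h) - 2 by nlinarith) hz]
        _ ≤ Real.exp 1 * ((4*h*Real.exp (4*h)) * ‖ζ‖) :=
            le_mul_of_one_le_left (by positivity) he1
        _ = Real.exp 1 * (4*h*Real.exp (4*h)*‖ζ‖) := by ring
  | (m+1) =>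
      rw [iteratedFDeriv_Gone ζ (m+1) (Nat.succ_ne_zero m) φ]
      exact hbs.2 m

lemma bound_Gtwo (hh : 1 ≤ h) (hz1 : ‖ζ‖ ≤ 1) (hK : 4*h*Real.exp (4*h)*‖ζ‖ ≤ 1)
    (n : ℕ) (φ : BB d) :
    ‖iteratedFDeriv ℝ n (Gtwo d ζ) φ‖ * h^n ≤
      (Real.exp 1 * (4*h*Real.exp (4*h)*‖ζ‖) * (4*h*Real.exp (4*h)*‖ζ‖)) * (1/2)^n
        * n.factorial := by
  have hz : (0:ℝ) ≤ ‖ζ‖ := norm_nonneg ζ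
  match n with
  | 0 =>
      have h0 : ‖iteratedFDeriv ℝ 0 (Gtwo d ζ) φ‖ ≤ ‖ζ‖^2 := by
        rw [norm_iteratedFDeriv_zero]; exact norm_Gtwo_le ζ hz1 φ
      have he1 : (1:ℝ) ≤ Real.exp 1 := Real.one_le_exp zero_le_one
      have hexp4 : (1:ℝ) ≤ Real.exp (4*h) := Real.one_le_exp (by linarith)
      have hzK : ‖ζ‖ ≤ 4*h*Real.exp (4*h)*‖ζ‖ := by
        nlinarith [mul_nonneg (show (0:ℝ) ≤ 4*h*Real.exp (4*h) - 1 by nlinarith) hz]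
      have hKnn : (0:ℝ) ≤ 4*h*Real.exp (4*h)*‖ζ‖ := by positivity
      simp only [pow_zero, Nat.factorial_zero, Nat.cast_one, mul_one]
      calc ‖iteratedFDeriv ℝ 0 (Gtwo d ζ) φ‖ ≤ ‖ζ‖^2 := h0
        _ = ‖ζ‖ * ‖ζ‖ := sq ‖ζ‖
        _ ≤ (4*h*Real.exp (4*h)*‖ζ‖) * (4*h*Real.exp (4*h)*‖ζ‖) :=
            mul_le_mul hzK hzK hz hKnn
        _ ≤ Real.exp 1 * ((4*h*Real.exp (4*h)*‖ζ‖) * (4*h*Real.exp (4*h)*‖ζ‖)) :=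
            le_mul_of_one_le_left (by positivity) he1
        _ = Real.exp 1 * (4*h*Real.exp (4*h)*‖ζ‖) * (4*h*Real.exp (4*h)*‖ζ‖) := by ring
  | (m+1) =>
      have hM : (0:ℝ) ≤ Real.exp 1 * (4*h*Real.exp (4*h)*‖ζ‖) := by positivity
      have hstep := sum_step hz hM hh
        (fun n => ‖iteratedFDeriv ℝ n (Gtwo d ζ) φ‖)
        (fun i => ‖iteratedFDeriv ℝ i (Gone d ζ) φ‖) m
        (rec_Gtwo ζ m φ)
        (fun i _ => bound_Gone ζ hh hz1 hK i φ)
      calc ‖iteratedFDeriv ℝ (m+1) (Gtwo d ζ) φ‖ * h^(m+1)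
          ≤ (Real.exp 1 * (4*h*Real.exp (4*h)*‖ζ‖)) * (4*h*Real.exp (4*h)*‖ζ‖) * (1/2)^(m+1)
              * (m+1).factorial := hstep
        _ = (Real.exp 1 * (4*h*Real.exp (4*h)*‖ζ‖) * (4*h*Real.exp (4*h)*‖ζ‖)) * (1/2)^(m+1)
              * (m+1).factorial := by ring

end Bounds

/-! #### Summation of the weighted derivative bounds -/

lemma tsum_bound {h M : ℝ} (hh : 1 ≤ h) (hM : 0 ≤ M) {d : ℕ} (G : BB d → ℂ)
    (hb : ∀ (n : ℕ) (φ : BB d),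
      ‖iteratedFDeriv ℝ n G φ‖ * h^n ≤ M * (1/2)^n * n.factorial) :
    (∑' n : ℕ, h ^ n / n.factorial * ⨆ φ : BB d, ‖iteratedFDeriv ℝ n G φ‖) ≤ 2 * M := by
  have hh0 : (0:ℝ) < h := by linarith
  have hT : ∀ n : ℕ, h ^ n / n.factorial * (⨆ φ : BB d, ‖iteratedFDeriv ℝ n G φ‖)
      ≤ M * (1/2)^n := by
    intro n
    have hpow : (0:ℝ) < h^n := by positivity
    have hfac : (0:ℝ) < (n.factorial : ℝ) := by exact_mod_cast n.factorial_pos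
    have hsup : (⨆ φ : BB d, ‖iteratedFDeriv ℝ n G φ‖)
        ≤ M * (1/2)^n * n.factorial / h^n := by
      apply Real.iSup_le
      · intro φ
        rw [le_div_iff₀ hpow]
        exact hb n φ
      · positivity
    calc h ^ n / n.factorial * (⨆ φ : BB d, ‖iteratedFDeriv ℝ n G φ‖)
        ≤ h ^ n / n.factorial * (M * (1/2)^n * n.factorial / h^n) := by
          apply mul_le_mul_of_nonneg_left hsup
          positivity
      _ = M * (1/2)^n := by
          field_simp
  have hTnn : ∀ n : ℕ, 0 ≤ h ^ n / n.factorial * ⨆ φ : BB d, ‖iteratedFDeriv ℝ n G φ‖ := by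
    intro n
    apply mul_nonneg (by positivity)
    exact Real.iSup_nonneg (fun φ => norm_nonneg _)
  have hgs : Summable (fun n : ℕ => M * (1/2:ℝ)^n) := summable_geometric_two.mul_left M
  have hTs : Summable (fun n : ℕ =>
      h ^ n / n.factorial * ⨆ φ : BB d, ‖iteratedFDeriv ℝ n G φ‖) :=
    Summable.of_nonneg_of_le hTnn hT hgs
  calc (∑' n : ℕ, h ^ n / n.factorial * ⨆ φ : BB d, ‖iteratedFDeriv ℝ n G φ‖)
      ≤ ∑' n : ℕ, M * (1/2:ℝ)^n := Summable.tsum_le_tsum hT hTs hgs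
    _ = M * 2 := by rw [tsum_mul_left, tsum_geometric_two]
    _ = 2 * M := by ring

lemma rpow_aux {M₀ ε zz δ' : ℝ} (hM : 0 < M₀) (hε : 0 < ε) (hz : 0 < zz)
    (hδ' : δ' = M₀⁻¹ ^ (1/ε)) (hle : zz ≤ δ') : M₀ * zz ^ ε ≤ 1 := by
  have h1 : zz ^ ε ≤ δ' ^ ε := Real.rpow_le_rpow hz.le hle hε.le
  have h2 : δ' ^ ε = M₀⁻¹ := by
    rw [hδ', ← Real.rpow_mul (by positivity), one_div, inv_mul_cancel₀ (ne_of_gt hε),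
      Real.rpow_one]
  calc M₀ * zz ^ ε ≤ M₀ * M₀⁻¹ := by
        apply mul_le_mul_of_nonneg_left _ hM.le
        rw [← h2]; exact h1
    _ = 1 := mul_inv_cancel₀ (ne_of_gt hM)

end Stmt10Aux

open Stmt10Aux

/-- for `V(φ) = ∫_Δ cos(φ)`, `0 < ε < 1`, `h ≥ 1` and `|ζ|`
sufficiently small, `∑ₙ (hⁿ/n!) supᵩ ‖(e^{ζV}−1)_n(φ)‖ ≤ |ζ|^{1−ε}` and
`∑ₙ (hⁿ/n!) supᵩ ‖(e^{ζV}−ζV−1)_n(φ)‖ ≤ |ζ|^{2−ε}`. -/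
theorem stmt10 (d : ℕ) (hd : 0 < d) (ε h : ℝ) (hε : 0 < ε) (hε1 : ε < 1) (hh : 1 ≤ h) :
    let B := BoundedContinuousFunction (Fin d → ℝ) ℝ
    let V : B → ℂ := fun φ => ((∫ x in Set.Icc (0 : Fin d → ℝ) 1, Real.cos (φ x) : ℝ) : ℂ)
    ∃ δ : ℝ, 0 < δ ∧ ∀ ζ : ℂ, ‖ζ‖ ≤ δ →
      (∑' n : ℕ, h ^ n / n.factorial *
          ⨆ φ : B, ‖iteratedFDeriv ℝ n (fun ψ => Complex.exp (ζ * V ψ) - 1) φ‖)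
        ≤ ‖ζ‖ ^ (1 - ε) ∧
      (∑' n : ℕ, h ^ n / n.factorial *
          ⨆ φ : B, ‖iteratedFDeriv ℝ n (fun ψ => Complex.exp (ζ * V ψ) - ζ * V ψ - 1) φ‖)
        ≤ ‖ζ‖ ^ (2 - ε) := by
  intro B V
  have hV : V = VV d := VV_eq
  set M₀ : ℝ := 32 * Real.exp 1 * h^2 * Real.exp (8*h) with hM₀
  have hM₀pos : 0 < M₀ := by positivity
  set δ' : ℝ := M₀⁻¹ ^ (1/ε) with hδ'
  have hδ'pos : 0 < δ' := Real.rpow_pos_of_pos (by positivity) _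
  set c₀ : ℝ := (4*h*Real.exp (4*h))⁻¹ with hc₀
  have hc₀pos : 0 < c₀ := by positivity
  refine ⟨min 1 (min c₀ δ'), by positivity, ?_⟩
  intro ζ hζ
  rcases eq_or_ne ζ 0 with rfl | hζ0
  · haveI : Nonempty B := ⟨0⟩
    have hzero : ∀ n : ℕ,
        h ^ n / n.factorial * (⨆ φ : B, ‖iteratedFDeriv ℝ n (fun _ : B => (0:ℂ)) φ‖) = 0 := by
      intro n
      rw [iteratedFDeriv_zero_fun]
      simp
    constructor
    · have heq : (fun ψ : B => Complex.exp (0 * V ψ) - 1) = fun _ : B => (0:ℂ) := by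
        funext ψ; simp
      rw [heq]
      calc (∑' n : ℕ, h ^ n / n.factorial *
            ⨆ φ : B, ‖iteratedFDeriv ℝ n (fun _ : B => (0:ℂ)) φ‖)
          = ∑' _ : ℕ, (0:ℝ) := tsum_congr hzero
        _ = 0 := tsum_zero
        _ ≤ ‖(0:ℂ)‖ ^ (1-ε) := Real.rpow_nonneg (norm_nonneg _) _
    · have heq : (fun ψ : B => Complex.exp (0 * V ψ) - 0 * V ψ - 1) = fun _ : B => (0:ℂ) := by
        funext ψ; simp
      rw [heq]
      calc (∑' n : ℕ, h ^ n / n.factorial *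
            ⨆ φ : B, ‖iteratedFDeriv ℝ n (fun _ : B => (0:ℂ)) φ‖)
          = ∑' _ : ℕ, (0:ℝ) := tsum_congr hzero
        _ = 0 := tsum_zero
        _ ≤ ‖(0:ℂ)‖ ^ (2-ε) := Real.rpow_nonneg (norm_nonneg _) _
  · have hzpos : 0 < ‖ζ‖ := norm_pos_iff.mpr hζ0
    have hz1 : ‖ζ‖ ≤ 1 := le_trans hζ (min_le_left _ _)
    have hzc₀ : ‖ζ‖ ≤ c₀ := le_trans hζ (le_trans (min_le_right _ _) (min_le_left _ _))
    have hzδ' : ‖ζ‖ ≤ δ' := le_trans hζ (le_trans (min_le_right _ _) (min_le_right _ _))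
    have hK : 4*h*Real.exp (4*h)*‖ζ‖ ≤ 1 := by
      have : 4*h*Real.exp (4*h) * ‖ζ‖ ≤ 4*h*Real.exp (4*h) * c₀ := by
        apply mul_le_mul_of_nonneg_left hzc₀ (by positivity)
      rw [hc₀, mul_inv_cancel₀ (by positivity)] at this
      exact this
    have hMε : M₀ * ‖ζ‖ ^ ε ≤ 1 := rpow_aux hM₀pos hε hzpos hδ' hzδ'
    have hexp48 : Real.exp (4*h) ≤ Real.exp (8*h) := Real.exp_le_exp.2 (by linarith)
    have hexp4pos : 0 < Real.exp (4*h) := Real.exp_pos _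
    have he1 : (0:ℝ) < Real.exp 1 := Real.exp_pos 1
    constructor
    · -- first statement
      have hfun : (fun ψ : B => Complex.exp (ζ * V ψ) - 1) = Gone d ζ := by
        rw [hV]; rfl
      rw [hfun]
      have hsum := tsum_bound hh (M := Real.exp 1 * (4*h*Real.exp (4*h)*‖ζ‖)) (by positivity)
        (Gone d ζ) (bound_Gone ζ hh hz1 hK)
      refine hsum.trans ?_
      have hbase : 8*h*Real.exp (4*h) ≤ 32*h^2*Real.exp (8*h) := by
        calc 8*h*Real.exp (4*h) ≤ 8*h*Real.exp (8*h) := by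
              apply mul_le_mul_of_nonneg_left hexp48; linarith
          _ ≤ 32*h^2*Real.exp (8*h) := by
              nlinarith [mul_nonneg (show (0:ℝ) ≤ 32*h^2 - 8*h by nlinarith)
                (Real.exp_pos (8*h)).le]
      have hle : 2 * (Real.exp 1 * (4*h*Real.exp (4*h)*‖ζ‖)) ≤ M₀ * ‖ζ‖ := by
        calc 2 * (Real.exp 1 * (4*h*Real.exp (4*h)*‖ζ‖))
            = (8*h*Real.exp (4*h)) * (Real.exp 1 * ‖ζ‖) := by ring
          _ ≤ (32*h^2*Real.exp (8*h)) * (Real.exp 1 * ‖ζ‖) :=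
              mul_le_mul_of_nonneg_right hbase (by positivity)
          _ = M₀ * ‖ζ‖ := by rw [hM₀]; ring
      refine hle.trans ?_
      have hmul : ‖ζ‖ ^ ε * ‖ζ‖ ^ (1-ε) = ‖ζ‖ := by
        rw [← Real.rpow_add hzpos, show ε + (1-ε) = (1:ℝ) by ring, Real.rpow_one]
      have hsplit : M₀ * ‖ζ‖ = (M₀ * ‖ζ‖ ^ ε) * ‖ζ‖ ^ (1-ε) := by
        linear_combination M₀ * hmul.symm
      calc M₀ * ‖ζ‖ = (M₀ * ‖ζ‖ ^ ε) * ‖ζ‖ ^ (1-ε) := hsplit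
        _ ≤ 1 * ‖ζ‖ ^ (1-ε) := by
            apply mul_le_mul_of_nonneg_right hMε (Real.rpow_nonneg (norm_nonneg _) _)
        _ = ‖ζ‖ ^ (1-ε) := one_mul _
    · -- second statement
      have hfun : (fun ψ : B => Complex.exp (ζ * V ψ) - ζ * V ψ - 1) = Gtwo d ζ := by
        rw [hV]; rfl
      rw [hfun]
      have hsum := tsum_bound hh
        (M := Real.exp 1 * (4*h*Real.exp (4*h)*‖ζ‖) * (4*h*Real.exp (4*h)*‖ζ‖))
        (by positivity) (Gtwo d ζ) (bound_Gtwo ζ hh hz1 hK)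
      refine hsum.trans ?_
      have hee : Real.exp (4*h) * Real.exp (4*h) = Real.exp (8*h) := by
        rw [← Real.exp_add]; ring_nf
      have hle : 2 * (Real.exp 1 * (4*h*Real.exp (4*h)*‖ζ‖) * (4*h*Real.exp (4*h)*‖ζ‖))
          = M₀ * ‖ζ‖^2 := by
        rw [hM₀, ← hee]; ring
      rw [hle]
      have hmul : ‖ζ‖ ^ ε * ‖ζ‖ ^ (2-ε) = ‖ζ‖^2 := by
        rw [← Real.rpow_add hzpos, show ε + (2-ε) = ((2:ℕ):ℝ) by push_cast; ring,
          Real.rpow_natCast]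
      have hsplit : M₀ * ‖ζ‖^2 = (M₀ * ‖ζ‖ ^ ε) * ‖ζ‖ ^ (2-ε) := by
        linear_combination M₀ * hmul.symm
      calc M₀ * ‖ζ‖^2 = (M₀ * ‖ζ‖ ^ ε) * ‖ζ‖ ^ (2-ε) := hsplit
        _ ≤ 1 * ‖ζ‖ ^ (2-ε) := by
            apply mul_le_mul_of_nonneg_right hMε (Real.rpow_nonneg (norm_nonneg _) _)
        _ = ‖ζ‖ ^ (2-ε) := one_mul _
end
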